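/- For the 3×3 symmetric matrix M = [[k₁C/Re, k₁/2, 0], [k₁/2, k₂C/Re, 0], [0, 0, k₂C/Re]] with positive reals k₁, k₂, C, Re, the matrix M is positive semidefinite if and only if k₂/k₁ ≥ (Re/(2C))². -/

import Mathlib

theorem stmt_0 (k₁ k₂ C Re : ℝ) (hk₁ : 0 < k₁) (hk₂ : 0 < k₂) (hC : 0 < C) (hRe : 0 < Re) :
    (Matrix.PosSemidef
      (!![k₁ * C / Re, k₁ / 2, 0;
          k₁ / 2, k₂ * C / Re, 0;
          0, 0, k₂ * C / Re] : Matrix (Fin 3) (Fin 3) ℝ)) ↔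
    k₂ / k₁ ≥ (Re / (2 * C)) ^ 2 := by
  constructor
  · intro h
    have key := (Matrix.posSemidef_iff_dotProduct_mulVec.mp h).2 ![2 * (k₂ * C / Re), -k₁, 0]
    simp [dotProduct, Matrix.mulVec, Fin.sum_univ_three] at key
    have hpoly : k₁ ^ 2 * Re ^ 2 ≤ 4 * k₁ * k₂ * C ^ 2 := by
      have hmul := mul_le_mul_of_nonneg_left key (le_of_lt (by positivity : (0:ℝ) < Re ^ 2))
      have e1 : Re ^ 2 * (k₁ * (k₁ / 2 * (2 * (k₂ * C / Re)) + -(k₂ * C / Re * k₁))) = 0 := by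
        field_simp
        ring
      have e2 : Re ^ 2 * (2 * (k₂ * C / Re) * (k₁ * C / Re * (2 * (k₂ * C / Re)) + -(k₁ / 2 * k₁)))
          = (k₂ * C / Re) * (4 * k₁ * k₂ * C ^ 2 - k₁ ^ 2 * Re ^ 2) := by
        field_simp
        ring
      rw [e1, e2] at hmul
      nlinarith [nonneg_of_mul_nonneg_right hmul (by positivity : (0:ℝ) < k₂ * C / Re)]
    rw [ge_iff_le, div_pow, div_le_div_iff₀ (by positivity) hk₁]
    nlinarith
  · intro h
    have hkey : k₁ ^ 2 * Re ^ 2 ≤ k₂ * k₁ * (2 * C) ^ 2 := by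
      rw [ge_iff_le, div_pow, div_le_div_iff₀ (by positivity) hk₁] at h
      nlinarith
    have hb : k₁ ^ 2 ≤ 4 * (k₁ * C / Re) * (k₂ * C / Re) := by
      have e : 4 * (k₁ * C / Re) * (k₂ * C / Re) = 4 * k₁ * k₂ * C ^ 2 / Re ^ 2 := by
        field_simp
      rw [e, le_div_iff₀ (by positivity)]
      nlinarith
    rw [Matrix.posSemidef_iff_dotProduct_mulVec]
    constructor
    · ext i j
      fin_cases i <;> fin_cases j <;> simp [Matrix.conjTranspose_apply]
    · intro x
      simp [dotProduct, Matrix.mulVec, Fin.sum_univ_three]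
      have ha : (0:ℝ) < k₁ * C / Re := by positivity
      have hc : (0:ℝ) < k₂ * C / Re := by positivity
      nlinarith [sq_nonneg (2 * (k₁ * C / Re) * x 0 + k₁ * x 1),
        mul_nonneg (sub_nonneg.2 hb) (sq_nonneg (x 1)),
        mul_nonneg (mul_nonneg ha.le hc.le) (sq_nonneg (x 2)),
        mul_nonneg ha.le (sq_nonneg (x 2)),
        mul_nonneg hc.le (sq_nonneg (x 2)), ha.le]
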